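/- arXiv:2004.01143 — 4 statements merged into one kernel-verified Lean document; each statement's English description precedes it below -/
import Mathlib

section
/- Let v ≥ 2, c ≥ 2, and ñ ≥ c be integers with c dividing ñ, and set n = vñ. Let H^D = (1_v 1_v^T) ⊗ H^D_blk be the n×n Kronecker product of the v×v all-ones matrix with H^D_blk = (c/(vñ))B − (1/(vñ))J. Then H^D has eigenvalue 1 with multiplicity c−1 and eigenvalue 0 with multiplicity n−c+1; in particular H^D is positive semi-definite, ‖H^D‖ = 1, and for every real n×n matrix K the matrix K^T H^D K is positive semi-definite. -/
open Matrix Kronecker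

/-- The spectral (operator) norm of a real square matrix. -/
noncomputable def specNorm {I : Type*} [Fintype I] [DecidableEq I]
    (A : Matrix I I ℝ) : ℝ :=
  ‖Matrix.toEuclideanCLM (𝕜 := ℝ) A‖

/-- The `nt × nt` block-diagonal matrix with `c` all-ones diagonal blocks of size `nt/c`. -/
def blockOnes (nt c : ℕ) : Matrix (Fin nt) (Fin nt) ℝ :=
  Matrix.of fun s t => if (s : ℕ) / (nt / c) = (t : ℕ) / (nt / c) then 1 else 0

/-- The `nt × nt` all-ones matrix. -/
def allOnes (nt : ℕ) : Matrix (Fin nt) (Fin nt) ℝ :=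
  Matrix.of fun _ _ => 1

open Polynomial Finset in
lemma filter_div_eq (m c q : ℕ) (hm : 0 < m) (hq : q < c) :
    Finset.filter (fun k => k / m = q) (Finset.range (c * m)) =
      Finset.Ico (q * m) (q * m + m) := by
  ext k
  simp only [Finset.mem_filter, Finset.mem_range, Finset.mem_Ico]
  constructor
  · rintro ⟨hk, rfl⟩
    refine ⟨Nat.div_mul_le_self k m, ?_⟩
    calc k = m * (k / m) + k % m := (Nat.div_add_mod k m).symm
    _ < m * (k / m) + m := by have := Nat.mod_lt k hm; omega
    _ = k / m * m + m := by ring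
  · rintro ⟨h1, h2⟩
    have hdiv : k / m = q := Nat.div_eq_of_lt_le h1 (by rw [Nat.succ_mul]; omega)
    refine ⟨?_, hdiv⟩
    calc k < q * m + m := h2
    _ = (q + 1) * m := by ring
    _ ≤ c * m := Nat.mul_le_mul_right m hq

lemma sum_ite_div (nt c m q : ℕ) (h : nt = c * m) (hm : 0 < m) (hq : q < c) :
    ∑ k : Fin nt, (if (k : ℕ) / m = q then (1 : ℝ) else 0) = m := by
  rw [Fin.sum_univ_eq_sum_range (fun k => if k / m = q then (1:ℝ) else 0) nt,
    Finset.sum_boole, h, filter_div_eq m c q hm hq, Nat.card_Ico]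
  simp

open Polynomial in
lemma charpoly_conj_unit {n R : Type*} [Fintype n] [DecidableEq n] [CommRing R]
    (U A V : Matrix n n R) (hUV : U * V = 1) :
    (U * A * V).charpoly = A.charpoly := by
  have hcomm : ∀ M : Matrix n n R, Matrix.scalar n (X : R[X]) * (RingHom.mapMatrix C M) =
      (RingHom.mapMatrix C M) * Matrix.scalar n (X : R[X]) :=
    fun M => (Matrix.scalar_commute (X : R[X]) (fun r' => Commute.all _ _) _).eq
  have h : charmatrix (U * A * V) =
      (RingHom.mapMatrix (C : R →+* R[X])) U * charmatrix A *
        (RingHom.mapMatrix (C : R →+* R[X])) V := by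
    unfold charmatrix
    rw [mul_sub, sub_mul, mul_assoc (RingHom.mapMatrix C U), ← _root_.map_mul, ← _root_.map_mul]
    congr 1
    rw [hcomm, ← mul_assoc, ← _root_.map_mul, hUV, _root_.map_one, one_mul]
  have h2 : (RingHom.mapMatrix (C : R →+* R[X]) U).det
      * (RingHom.mapMatrix (C : R →+* R[X]) V).det = 1 := by
    rw [← det_mul, ← _root_.map_mul, hUV, _root_.map_one, det_one]
  rw [Matrix.charpoly, Matrix.charpoly, h, det_mul, det_mul, mul_right_comm, h2, one_mul]

open Polynomial in
lemma charmatrix_diagonal' {n R : Type*} [Fintype n] [DecidableEq n] [CommRing R] (d : n → R) :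
    charmatrix (Matrix.diagonal d) = Matrix.diagonal (fun i => (X : R[X]) - C (d i)) := by
  ext i j
  by_cases h : i = j
  · subst h; simp
  · rw [charmatrix_apply_ne _ _ _ h, Matrix.diagonal_apply_ne _ h,
      Matrix.diagonal_apply_ne _ h, map_zero, neg_zero]

open Polynomial in
lemma charpoly_diagonal' {n R : Type*} [Fintype n] [DecidableEq n] [CommRing R] (d : n → R) :
    (Matrix.diagonal d).charpoly = ∏ i, ((X : R[X]) - C (d i)) := by
  rw [Matrix.charpoly, charmatrix_diagonal', det_diagonal]

set_option maxHeartbeats 2000000 in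
set_option synthInstance.maxHeartbeats 400000 in
theorem stmt3 (v c nt : ℕ) (hv : 2 ≤ v) (hc : 2 ≤ c) (hnc : c ≤ nt) (hdvd : c ∣ nt) :
    let Hblk : Matrix (Fin nt) (Fin nt) ℝ :=
      ((c : ℝ) / ((v : ℝ) * nt)) • blockOnes nt c - ((1 : ℝ) / ((v : ℝ) * nt)) • allOnes nt
    let HD : Matrix (Fin v × Fin nt) (Fin v × Fin nt) ℝ := allOnes v ⊗ₖ Hblk
    Polynomial.rootMultiplicity 1 HD.charpoly = c - 1 ∧
    Polynomial.rootMultiplicity 0 HD.charpoly = v * nt - c + 1 ∧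
    HD.PosSemidef ∧
    specNorm HD = 1 ∧
    ∀ K : Matrix (Fin v × Fin nt) (Fin v × Fin nt) ℝ, (Kᵀ * HD * K).PosSemidef := by
  intro Hblk HD
  have hHblk : Hblk = ((c : ℝ) / ((v : ℝ) * nt)) • blockOnes nt c
      - ((1 : ℝ) / ((v : ℝ) * nt)) • allOnes nt := rfl
  have hHD : HD = allOnes v ⊗ₖ Hblk := rfl
  obtain ⟨m, hm⟩ := hdvd
  have hm0 : 0 < m := by nlinarith
  have hnt2 : 2 ≤ nt := le_trans hc hnc
  have hd : nt / c = m := by rw [hm, Nat.mul_div_cancel_left m (by omega)]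
  have hvR : (0:ℝ) < v := by exact_mod_cast (by omega : 0 < v)
  have hntR : (0:ℝ) < nt := by exact_mod_cast (by omega : 0 < nt)
  have hcm : (c:ℝ) * m = nt := by exact_mod_cast hm.symm
  have hqlt : ∀ t : Fin nt, (t : ℕ) / m < c := by
    intro t
    rw [Nat.div_lt_iff_lt_mul hm0]
    calc (t:ℕ) < nt := t.isLt
    _ = c * m := hm
  -- product lemmas
  have hBB : blockOnes nt c * blockOnes nt c = (m:ℝ) • blockOnes nt c := by
    ext s t
    rw [Matrix.mul_apply]
    simp only [blockOnes, Matrix.of_apply, Matrix.smul_apply, smul_eq_mul, hd]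
    by_cases hst : (s:ℕ) / m = (t:ℕ) / m
    · have hterm : ∀ k : Fin nt,
          (if (s:ℕ)/m = (k:ℕ)/m then (1:ℝ) else 0) * (if (k:ℕ)/m = (t:ℕ)/m then 1 else 0)
            = if (k:ℕ)/m = (t:ℕ)/m then 1 else 0 := by
        intro k
        by_cases h : (k:ℕ)/m = (t:ℕ)/m
        · simp [h, hst.trans h.symm]
        · simp [h]
      rw [Finset.sum_congr rfl (fun k _ => hterm k),
        sum_ite_div nt c m ((t:ℕ)/m) hm hm0 (hqlt t), hst]
      simp
    · rw [if_neg hst, mul_zero]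
      apply Finset.sum_eq_zero
      intro k _
      by_cases h1 : (s:ℕ)/m = (k:ℕ)/m
      · by_cases h2 : (k:ℕ)/m = (t:ℕ)/m
        · exact absurd (h1.trans h2) hst
        · simp [h2]
      · simp [h1]
  have hBJ : blockOnes nt c * allOnes nt = (m:ℝ) • allOnes nt := by
    ext s t
    rw [Matrix.mul_apply]
    simp only [blockOnes, allOnes, Matrix.of_apply, Matrix.smul_apply, smul_eq_mul, hd, mul_one]
    have : ∀ k : Fin nt, (if (s:ℕ)/m = (k:ℕ)/m then (1:ℝ) else 0)
        = if (k:ℕ)/m = (s:ℕ)/m then (1:ℝ) else 0 := by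
      intro k; simp [eq_comm]
    rw [Finset.sum_congr rfl (fun k _ => this k),
      sum_ite_div nt c m ((s:ℕ)/m) hm hm0 (hqlt s)]
  have hJB : allOnes nt * blockOnes nt c = (m:ℝ) • allOnes nt := by
    ext s t
    rw [Matrix.mul_apply]
    simp only [blockOnes, allOnes, Matrix.of_apply, Matrix.smul_apply, smul_eq_mul, hd, one_mul]
    rw [sum_ite_div nt c m ((t:ℕ)/m) hm hm0 (hqlt t), mul_one]
  have hJJ : allOnes nt * allOnes nt = (nt:ℝ) • allOnes nt := by
    ext s t
    rw [Matrix.mul_apply]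
    simp [allOnes]
  have hvv : allOnes v * allOnes v = (v:ℝ) • allOnes v := by
    ext s t
    rw [Matrix.mul_apply]
    simp [allOnes]
  -- Hblk as a scalar multiple of M
  set B := blockOnes nt c with hB
  set J := allOnes nt with hJ
  set M : Matrix (Fin nt) (Fin nt) ℝ := (c:ℝ) • B - J with hMdef
  have hHblkM : Hblk = (((v:ℝ) * nt)⁻¹) • M := by
    rw [hHblk, hMdef, smul_sub, smul_smul, div_eq_mul_inv, mul_comm ((c:ℝ)), one_div]
  have hMM : M * M = (nt:ℝ) • M := by
    rw [hMdef, sub_mul, mul_sub, mul_sub, smul_mul_assoc, smul_mul_assoc,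
      Matrix.mul_smul, hBB, hBJ, Matrix.mul_smul, hJB, hJJ]
    match_scalars
    · linear_combination (c:ℝ) * hcm
    · linear_combination -2 * hcm
  have hvnt : ((v:ℝ) * nt) ≠ 0 := by positivity
  have hblk2 : Hblk * Hblk = ((v:ℝ)⁻¹) • Hblk := by
    rw [hHblkM, smul_mul_assoc, Matrix.mul_smul, hMM, smul_smul, smul_smul, smul_smul]
    congr 1
    field_simp
  have hidem : HD * HD = HD := by
    rw [hHD, ← Matrix.mul_kronecker_mul, hvv, hblk2, Matrix.smul_kronecker,
      Matrix.kronecker_smul, smul_smul]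
    rw [mul_inv_cancel₀ (ne_of_gt hvR), one_smul]
  -- symmetry
  have hblksym : ∀ s t : Fin nt, Hblk s t = Hblk t s := by
    intro s t
    rw [hHblk, hB, hJ]
    simp only [Matrix.sub_apply, Matrix.smul_apply, smul_eq_mul, blockOnes, allOnes,
      Matrix.of_apply]
    by_cases h : (s:ℕ) / (nt/c) = (t:ℕ) / (nt/c)
    · rw [if_pos h, if_pos h.symm]
    · rw [if_neg h, if_neg (fun hh => h hh.symm)]
  have hsym : HDᴴ = HD := by
    ext p q
    obtain ⟨i, s⟩ := p
    obtain ⟨j, t⟩ := q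
    rw [Matrix.conjTranspose_apply, hHD]
    simp only [Matrix.kroneckerMap_apply, star_trivial]
    show allOnes v j i * Hblk t s = allOnes v i j * Hblk s t
    rw [hblksym t s]
    rfl
  have hPSD : HD.PosSemidef := by
    have h : HD = HDᴴ * HD := by rw [hsym, hidem]
    rw [h]
    exact Matrix.posSemidef_conjTranspose_mul_self HD
  -- trace
  have htr : HD.trace = (c:ℝ) - 1 := by
    rw [hHD, Matrix.trace_kronecker]
    have h1 : (allOnes v).trace = (v:ℝ) := by
      simp [Matrix.trace, Matrix.diag, allOnes]
    have h2 : Hblk.trace = ((c:ℝ) - 1) / (v:ℝ) := by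
      rw [hHblk, hB, hJ]
      simp only [Matrix.trace, Matrix.diag, Matrix.sub_apply, Matrix.smul_apply, smul_eq_mul,
        blockOnes, allOnes, Matrix.of_apply, if_pos rfl, if_true, mul_one, Finset.sum_const,
        Finset.card_univ, Fintype.card_fin, nsmul_eq_mul]
      field_simp
    rw [h1, h2]
    field_simp
  -- spectral data
  have hherm : HD.IsHermitian := hsym
  set mu : (Fin v × Fin nt) → ℝ := hherm.eigenvalues with hmu
  have hdiagmu : (RCLike.ofReal ∘ mu : (Fin v × Fin nt) → ℝ) = mu := by
    funext i
    simp [RCLike.ofReal_real_eq_id]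
  have hmu2 : ∀ i, mu i * mu i = mu i := by
    intro i
    have hb := hherm.mulVec_eigenvectorBasis i
    have hb0 : ⇑(hherm.eigenvectorBasis i) ≠ 0 := by
      intro h
      apply hherm.eigenvectorBasis.orthonormal.ne_zero i
      ext j
      exact congrFun h j
    obtain ⟨j, hj⟩ := Function.ne_iff.mp hb0
    have h1 : (HD * HD) *ᵥ ⇑(hherm.eigenvectorBasis i)
        = (mu i * mu i) • ⇑(hherm.eigenvectorBasis i) := by
      rw [← Matrix.mulVec_mulVec, hb, Matrix.mulVec_smul, hb, smul_smul]
    rw [hidem, hb] at h1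
    have h2 := congrFun h1 j
    simp only [Pi.smul_apply, smul_eq_mul] at h2
    exact mul_right_cancel₀ hj h2.symm
  have hmu01 : ∀ i, mu i = 0 ∨ mu i = 1 := by
    intro i
    have h : mu i * (mu i - 1) = 0 := by
      have := hmu2 i; ring_nf; linarith
    rcases mul_eq_zero.mp h with h | h
    · exact Or.inl h
    · exact Or.inr (by linarith)
  have hsum : ∑ i, mu i = (c:ℝ) - 1 := by
    have h1 : HD.trace = ∑ i, mu i := by
      conv_lhs => rw [hherm.spectral_theorem]; simp only [Unitary.conjStarAlgAut_apply, Unitary.coe_star]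
      rw [Matrix.trace_mul_cycle,
        Matrix.mem_unitaryGroup_iff'.mp (hherm.eigenvectorUnitary).2, one_mul, ← hmu, hdiagmu,
        Matrix.trace_diagonal]
    rw [← h1, htr]
  have hcp : HD.charpoly = ∏ i, (Polynomial.X - Polynomial.C (mu i)) := by
    conv_lhs => rw [hherm.spectral_theorem]; simp only [Unitary.conjStarAlgAut_apply, Unitary.coe_star]
    rw [charpoly_conj_unit _ _ _ (Matrix.mem_unitaryGroup_iff.mp (hherm.eigenvectorUnitary).2),
      ← hmu, hdiagmu, charpoly_diagonal']
  have hroots : HD.charpoly.roots = Finset.univ.val.map mu := by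
    rw [hcp, Finset.prod_eq_multiset_prod]
    have := Polynomial.roots_multiset_prod_X_sub_C (Finset.univ.val.map mu)
    rw [Multiset.map_map] at this
    exact this
  -- cardinalities
  have hcard1 : (Finset.univ.filter (fun i => mu i = 1)).card = c - 1 := by
    have hsplit := Finset.sum_filter_add_sum_filter_not Finset.univ (fun i => mu i = 1) mu
    have h1 : ∑ i ∈ Finset.univ.filter (fun i => mu i = 1), mu i
        = ((Finset.univ.filter (fun i => mu i = 1)).card : ℝ) := by
      rw [Finset.sum_congr rfl (fun i hi => (Finset.mem_filter.mp hi).2)]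
      simp
    have h0 : ∑ i ∈ Finset.univ.filter (fun i => ¬ mu i = 1), mu i = 0 := by
      apply Finset.sum_eq_zero
      intro i hi
      rcases hmu01 i with h | h
      · exact h
      · exact absurd h (Finset.mem_filter.mp hi).2
    rw [h1, h0, add_zero, hsum] at hsplit
    have : (((Finset.univ.filter (fun i => mu i = 1)).card : ℝ)) = ((c - 1 : ℕ) : ℝ) := by
      rw [hsplit, Nat.cast_sub (by omega), Nat.cast_one]
    exact_mod_cast this
  have hcardN : Fintype.card (Fin v × Fin nt) = v * nt := by simp
  have hclevnt : c ≤ v * nt := le_trans hnc (Nat.le_mul_of_pos_left nt (by omega))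
  have hcard0 : (Finset.univ.filter (fun i => mu i = 0)).card = v * nt - c + 1 := by
    have hpart := Finset.card_filter_add_card_filter_not
      (s := (Finset.univ : Finset (Fin v × Fin nt))) (p := fun i => mu i = 1)
    have heq : Finset.univ.filter (fun i => ¬ mu i = 1)
        = Finset.univ.filter (fun i => mu i = 0) := by
      apply Finset.filter_congr
      intro i _
      rcases hmu01 i with h | h <;> simp [h]
    rw [heq, Finset.card_univ, hcardN, hcard1] at hpart
    omega
  -- root multiplicities
  have hcard1' : (Multiset.filter (fun i => mu i = 1) Finset.univ.val).card = c - 1 := by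
    rw [← Finset.filter_val, ← Finset.card_def]
    exact hcard1
  have hcard0' : (Multiset.filter (fun i => mu i = 0) Finset.univ.val).card = v * nt - c + 1 := by
    rw [← Finset.filter_val, ← Finset.card_def]
    exact hcard0
  have hrm1 : Polynomial.rootMultiplicity 1 HD.charpoly = c - 1 := by
    rw [← Polynomial.count_roots, hroots, Multiset.count_map]
    rw [Multiset.filter_congr (fun a _ => (eq_comm : (1:ℝ) = mu a ↔ mu a = 1))]
    exact hcard1'
  have hrm0 : Polynomial.rootMultiplicity 0 HD.charpoly = v * nt - c + 1 := by
    rw [← Polynomial.count_roots, hroots, Multiset.count_map]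
    rw [Multiset.filter_congr (fun a _ => (eq_comm : (0:ℝ) = mu a ↔ mu a = 0))]
    exact hcard0'
  -- spectral norm
  have hcR : (2:ℝ) ≤ c := by exact_mod_cast hc
  have hne : HD ≠ 0 := by
    intro h
    have h0 : Hblk ⟨0, by omega⟩ ⟨0, by omega⟩ = 0 := by
      have h1 := congrFun (congrFun h ((⟨0, by omega⟩ : Fin v), (⟨0, by omega⟩ : Fin nt)))
        ((⟨0, by omega⟩ : Fin v), (⟨0, by omega⟩ : Fin nt))
      rw [hHD] at h1
      simpa [Matrix.kroneckerMap_apply, allOnes] using h1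
    rw [hHblk, hB, hJ] at h0
    simp only [Matrix.sub_apply, Matrix.smul_apply, smul_eq_mul, blockOnes, allOnes,
      Matrix.of_apply, if_pos rfl, if_true, mul_one] at h0
    have h2 : (c:ℝ) - 1 = 0 := by
      field_simp at h0
      linarith
    linarith
  have hspec : specNorm HD = 1 := by
    have hTdef : specNorm HD = ‖Matrix.toEuclideanCLM (𝕜 := ℝ) HD‖ := rfl
    set T := Matrix.toEuclideanCLM (𝕜 := ℝ) HD with hT
    have hT2 : T * T = T := by rw [hT, ← _root_.map_mul, hidem]
    have hTstar : star T = T := by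
      rw [hT, ← map_star, Matrix.star_eq_conjTranspose, hsym]
    have hTn0 : T ≠ 0 := by
      intro h
      apply hne
      have h1 : Matrix.toEuclideanCLM (𝕜 := ℝ) HD = Matrix.toEuclideanCLM (𝕜 := ℝ) 0 := by
        rw [← hT, h, map_zero]
      exact (Matrix.toEuclideanCLM (𝕜 := ℝ)).injective h1
    have hnn := CStarRing.norm_star_mul_self (x := T)
    rw [hTstar, hT2] at hnn
    have hTne : ‖T‖ ≠ 0 := fun h => hTn0 (norm_eq_zero.mp h)
    have h1 : ‖T‖ = 1 :=
      mul_left_cancel₀ hTne (by rw [mul_one, ← hnn])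
    rw [hTdef, h1]
  refine ⟨hrm1, hrm0, hPSD, hspec, ?_⟩
  intro K
  have hK : Kᵀ = Kᴴ := by
    ext i j
    simp [Matrix.conjTranspose_apply]
  rw [hK]
  exact hPSD.conjTranspose_mul_mul_same K
end

section
/- Let d ≥ 1, σ > 0, and x, y ∈ ℝ^d. If w ∼ N(0, σ^{-2} I_d) and b ∼ Uniform([0, 2π]) are independent random variables, then E[ (√2 cos(wᵀx + b)) · (√2 cos(wᵀy + b)) ] = exp(−‖x−y‖²/(2σ²)); that is, the random Fourier feature map f_{w,b}(x) = √2 cos(wᵀx + b) gives an unbiased estimator of the Gaussian kernel. -/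
open MeasureTheory ProbabilityTheory Real
open scoped NNReal ENNReal

lemma gauss_char {v : ℝ≥0} (hv : v ≠ 0) (a : ℝ) :
    ∫ w : ℝ, Complex.exp (a * w * Complex.I) ∂(gaussianReal 0 v)
      = Complex.exp (-(a ^ 2 * v) / 2) := by
  have hv0 : (0:ℝ) < v := NNReal.coe_pos.mpr (pos_iff_ne_zero.mpr hv)
  rw [gaussianReal_of_var_ne_zero 0 hv]
  have hpdf : gaussianPDF 0 v = fun x => (((gaussianPDFReal 0 v x).toNNReal : ℝ≥0) : ℝ≥0∞) := rfl
  rw [hpdf, integral_withDensity_eq_integral_smul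
    (by exact (measurable_gaussianPDFReal 0 v).real_toNNReal)]
  have key : ∀ x : ℝ, ((gaussianPDFReal 0 v x).toNNReal : ℝ≥0) • Complex.exp (a * x * Complex.I)
      = ((√(2 * π * v))⁻¹ : ℝ) *
        Complex.exp ((-(1/(2*(v:ℝ))) : ℂ) * x ^ 2 + (a * Complex.I) * x + 0) := by
    intro x
    rw [NNReal.smul_def, Real.coe_toNNReal _ (gaussianPDFReal_nonneg 0 v x)]
    rw [Complex.real_smul, gaussianPDFReal]
    push_cast
    rw [mul_assoc, ← Complex.exp_add]
    congr 1
    push_cast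
    field_simp
    ring
  simp_rw [key]
  rw [integral_const_mul, integral_cexp_quadratic (by
      simp only [Complex.neg_re, Complex.ofReal_re]
      norm_num
      positivity) (a * Complex.I) 0]
  have h1 : ((π : ℂ) / -(-(1/(2*(v:ℝ))) : ℂ)) = ((2 * π * v : ℝ) : ℂ) := by
    push_cast
    field_simp
  rw [h1]
  have h2 : (((2 * π * v : ℝ) : ℂ)) ^ (1/2 : ℂ) = ((√(2 * π * v) : ℝ) : ℂ) := by
    rw [Real.sqrt_eq_rpow, Complex.ofReal_cpow (by positivity)]
    norm_num
  rw [h2]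
  have h3 : ((0 : ℂ) - (a * Complex.I)^2 / (4 * (-(1/(2*(v:ℝ))) : ℂ))) = -(a^2*v)/2 := by
    have : ((v:ℂ)) ≠ 0 := by exact_mod_cast hv0.ne'
    field_simp
    rw [Complex.I_sq]
    ring
  rw [h3, ← mul_assoc, ← Complex.ofReal_mul, inv_mul_cancel₀ (by positivity), Complex.ofReal_one, one_mul]

lemma pi_int (d : ℕ) (μ : Measure ℝ) [SigmaFinite μ] (f : Fin d → ℝ → ℂ) :
    ∫ w : Fin d → ℝ, ∏ i, f i (w i) ∂(Measure.pi fun _ => μ) = ∏ i, ∫ x, f i x ∂μ := by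
  letI : MeasureSpace ℝ := ⟨μ⟩
  exact MeasureTheory.integral_fintype_prod_eq_prod (μ := fun _ => μ) f

lemma gauss_cos (d : ℕ) {v : ℝ≥0} (hv : v ≠ 0) (t : Fin d → ℝ) :
    ∫ w : Fin d → ℝ, Real.cos (∑ i, w i * t i) ∂(Measure.pi fun _ => gaussianReal 0 v)
      = Real.exp (-(∑ i, t i ^ 2) * v / 2) := by
  have hF : ∀ w : Fin d → ℝ, Complex.exp ((∑ i, w i * t i : ℝ) * Complex.I)
      = ∏ i, Complex.exp ((t i : ℂ) * (w i : ℝ) * Complex.I) := by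
    intro w
    rw [← Complex.exp_sum]
    congr 1
    push_cast
    rw [Finset.sum_mul]
    exact Finset.sum_congr rfl fun i _ => by ring
  have hre : ∀ w : Fin d → ℝ, Real.cos (∑ i, w i * t i)
      = (Complex.exp ((∑ i, w i * t i : ℝ) * Complex.I)).re := fun w =>
    (Complex.exp_ofReal_mul_I_re _).symm
  simp_rw [hre]
  have hint : Integrable (fun w : Fin d → ℝ => Complex.exp ((∑ i, w i * t i : ℝ) * Complex.I))
      (Measure.pi fun _ => gaussianReal 0 v) := by
    refine (integrable_const (1 : ℝ)).mono' ?_ ?_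
    · apply Continuous.aestronglyMeasurable
      fun_prop
    · filter_upwards with w
      rw [Complex.norm_exp_ofReal_mul_I]
  simp_rw [← RCLike.re_to_complex]
  rw [integral_re hint]
  simp_rw [hF]
  rw [pi_int d (gaussianReal 0 v) (fun i x => Complex.exp ((t i : ℂ) * x * Complex.I))]
  have : ∀ i : Fin d, ∫ x : ℝ, Complex.exp ((t i : ℂ) * x * Complex.I) ∂(gaussianReal 0 v)
      = Complex.exp (-((t i) ^ 2 * v) / 2) := fun i => gauss_char hv (t i)
  simp_rw [this, ← Complex.exp_sum]
  have : (∑ i, -(((t i : ℝ) : ℂ) ^ 2 * (v : ℝ)) / 2) = ((-(∑ i, t i ^ 2) * v / 2 : ℝ) : ℂ) := by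
    push_cast
    rw [neg_mul, neg_div, ← Finset.sum_div, Finset.sum_neg_distrib, ← Finset.sum_mul]
    ring
  rw [this, ← Complex.ofReal_exp]
  exact RCLike.ofReal_re _

/-- if `w ∼ N(0, σ⁻² I_d)` and `b ∼ Uniform([0, 2π])` are independent
(formalized via the product measure), then the random Fourier feature
`f_{w,b}(x) = √2 cos(wᵀx + b)` satisfies
`E[f_{w,b}(x) f_{w,b}(y)] = exp(−‖x−y‖²/(2σ²))`. -/
theorem stmt6 (d : ℕ) (hd : 1 ≤ d) (σ : ℝ) (hσ : 0 < σ)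
    (x y : EuclideanSpace ℝ (Fin d)) :
    ∫ p : (Fin d → ℝ) × ℝ,
        (Real.sqrt 2 * Real.cos (∑ i, p.1 i * x i + p.2)) *
        (Real.sqrt 2 * Real.cos (∑ i, p.1 i * y i + p.2))
        ∂((Measure.pi fun _ : Fin d => gaussianReal 0 ⟨σ⁻¹ ^ 2, sq_nonneg _⟩).prod
            ((ENNReal.ofReal (2 * Real.pi))⁻¹ •
              (volume.restrict (Set.Icc (0 : ℝ) (2 * Real.pi)))))
      = Real.exp (-‖x - y‖ ^ 2 / (2 * σ ^ 2)) := by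
  have hπ : (0:ℝ) < 2 * π := by positivity
  set v : ℝ≥0 := ⟨σ⁻¹ ^ 2, sq_nonneg _⟩ with hv_def
  have hv : v ≠ 0 := by
    intro h
    have : σ⁻¹ ^ 2 = 0 := congrArg NNReal.toReal h
    replace this : σ⁻¹ = 0 := (pow_eq_zero_iff two_ne_zero).mp this
    exact hσ.ne' (by simpa using this)
  set μ := Measure.pi fun _ : Fin d => gaussianReal 0 v with hμ_def
  set ν := (ENNReal.ofReal (2 * π))⁻¹ • volume.restrict (Set.Icc (0:ℝ) (2 * π)) with hν_def
  haveI : IsProbabilityMeasure ν := by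
    constructor
    rw [hν_def, Measure.smul_apply, Measure.restrict_apply MeasurableSet.univ,
      Set.univ_inter, Real.volume_Icc, smul_eq_mul, sub_zero]
    rw [ENNReal.inv_mul_cancel (by simp [hπ, Real.pi_pos]) ENNReal.ofReal_ne_top]
  haveI : IsProbabilityMeasure μ := by
    rw [hμ_def]; infer_instance
  -- rewrite the integrand
  have hfun : ∀ p : (Fin d → ℝ) × ℝ,
      (Real.sqrt 2 * Real.cos (∑ i, p.1 i * x i + p.2)) *
        (Real.sqrt 2 * Real.cos (∑ i, p.1 i * y i + p.2))
      = Real.cos (∑ i, p.1 i * (x i - y i)) +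
        Real.cos ((∑ i, p.1 i * x i + ∑ i, p.1 i * y i) + 2 * p.2) := by
    intro p
    have h2 : Real.sqrt 2 * Real.sqrt 2 = 2 := Real.mul_self_sqrt (by norm_num)
    have hcc : ∀ u u' : ℝ, 2 * (Real.cos u * Real.cos u')
        = Real.cos (u - u') + Real.cos (u + u') := by
      intro u u'
      rw [Real.cos_sub, Real.cos_add]
      ring
    set A := ∑ i, p.1 i * x i with hA
    set C := ∑ i, p.1 i * y i with hC
    have hsum : ∑ i, p.1 i * (x i - y i) = A - C := by
      rw [hA, hC, ← Finset.sum_sub_distrib]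
      exact Finset.sum_congr rfl fun i _ => by ring
    have e1 : (A + p.2) - (C + p.2) = A - C := by ring
    have e2 : (A + p.2) + (C + p.2) = (A + C) + 2 * p.2 := by ring
    calc (Real.sqrt 2 * Real.cos (A + p.2)) * (Real.sqrt 2 * Real.cos (C + p.2))
        = (Real.sqrt 2 * Real.sqrt 2) * (Real.cos (A + p.2) * Real.cos (C + p.2)) := by ring
      _ = 2 * (Real.cos (A + p.2) * Real.cos (C + p.2)) := by rw [h2]
      _ = Real.cos ((A + p.2) - (C + p.2)) + Real.cos ((A + p.2) + (C + p.2)) := hcc _ _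
      _ = _ := by rw [e1, e2, hsum]
  simp_rw [hfun]
  -- integrability
  have hcont : Continuous (fun p : (Fin d → ℝ) × ℝ =>
      Real.cos (∑ i, p.1 i * (x i - y i)) +
        Real.cos ((∑ i, p.1 i * x i + ∑ i, p.1 i * y i) + 2 * p.2)) := by fun_prop
  have hint : Integrable (fun p : (Fin d → ℝ) × ℝ =>
      Real.cos (∑ i, p.1 i * (x i - y i)) +
        Real.cos ((∑ i, p.1 i * x i + ∑ i, p.1 i * y i) + 2 * p.2)) (μ.prod ν) := by
    refine (integrable_const (2:ℝ)).mono' hcont.aestronglyMeasurable ?_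
    filter_upwards with p
    calc ‖_ + _‖ ≤ ‖Real.cos (∑ i, p.1 i * (x i - y i))‖ + ‖Real.cos _‖ := norm_add_le _ _
      _ ≤ 1 + 1 := add_le_add (by rw [Real.norm_eq_abs]; exact Real.abs_cos_le_one _)
          (by rw [Real.norm_eq_abs]; exact Real.abs_cos_le_one _)
      _ = 2 := by norm_num
  rw [MeasureTheory.integral_prod _ hint]
  -- inner integral
  have hinner : ∀ w : Fin d → ℝ,
      ∫ b : ℝ, (Real.cos (∑ i, w i * (x i - y i)) +
        Real.cos ((∑ i, w i * x i + ∑ i, w i * y i) + 2 * b)) ∂ν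
      = Real.cos (∑ i, w i * (x i - y i)) := by
    intro w
    set θ := (∑ i, w i * x i + ∑ i, w i * y i) with hθ
    have hint1 : Integrable (fun _ : ℝ => Real.cos (∑ i, w i * (x i - y i))) ν :=
      integrable_const _
    have hint2 : Integrable (fun b : ℝ => Real.cos (θ + 2 * b)) ν := by
      refine (integrable_const (1:ℝ)).mono' ((Real.continuous_cos.comp (by continuity)).aestronglyMeasurable) ?_
      filter_upwards with b
      rw [Real.norm_eq_abs]; exact Real.abs_cos_le_one _
    rw [integral_add hint1 hint2, integral_const, probReal_univ]
    have hz : ∫ b : ℝ, Real.cos (θ + 2 * b) ∂ν = 0 := by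
      rw [hν_def, integral_smul_measure]
      have : ∫ b in Set.Icc (0:ℝ) (2*π), Real.cos (θ + 2 * b) = 0 := by
        rw [integral_Icc_eq_integral_Ioc, ← intervalIntegral.integral_of_le hπ.le]
        have hc : ∀ b : ℝ, θ + 2 * b = 2 * b + θ := fun b => by ring
        simp_rw [hc]
        rw [intervalIntegral.integral_comp_mul_add Real.cos two_ne_zero θ,
          integral_cos]
        rw [show 2 * (2*π) + θ = (θ + 2*π) + 2*π by ring, Real.sin_add_two_pi,
          Real.sin_add_two_pi, show 2 * 0 + θ = θ by ring, sub_self, smul_zero]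
      rw [this, smul_zero]
    rw [hz, add_zero]
    simp
  simp_rw [hinner]
  -- outer integral
  rw [hμ_def, gauss_cos d hv (fun i => x i - y i)]
  congr 1
  have hnorm : ‖x - y‖ ^ 2 = ∑ i, (x i - y i) ^ 2 := by
    rw [EuclideanSpace.norm_eq, Real.sq_sqrt (by positivity)]
    exact Finset.sum_congr rfl fun i _ => by
      rw [Real.norm_eq_abs, sq_abs]
      simp [PiLp.sub_apply]
  have hvv : (v : ℝ) = σ⁻¹ ^ 2 := rfl
  have harith : ∀ S : ℝ, -S * σ⁻¹ ^ 2 / 2 = -S / (2 * σ ^ 2) := by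
    intro S
    rw [inv_pow, ← div_eq_mul_inv, div_div, mul_comm (σ ^ 2) 2]
  rw [hnorm, hvv]
  exact harith _
end

section
/- Let F be a random vector in ℝ^n such that ‖F‖² ≤ n almost surely and E[F Fᵀ] = K for a positive semi-definite matrix K. Then E[(F Fᵀ − K)²] ⪯ nK in the Loewner (positive semi-definite) order, and consequently ‖E[(F Fᵀ − K)²]‖ ≤ n‖K‖. -/
open Matrix MeasureTheory

set_option synthInstance.maxHeartbeats 1000000

section Aux

variable {E : Type*} [NormedAddCommGroup E] [InnerProductSpace ℝ E] [CompleteSpace E]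

private lemma stmt7_cs_pos {T : E →L[ℝ] E} (hT : T.IsPositive) (x y : E) :
    (inner ℝ (T x) y : ℝ) ^ 2 ≤ inner ℝ (T x) x * inner ℝ (T y) y := by
  have hsym : ∀ u v : E, (inner ℝ (T u) v : ℝ) = inner ℝ (T v) u := by
    intro u v
    calc (inner ℝ (T u) v : ℝ) = inner ℝ u (T v) :=
          hT.1 u v
      _ = inner ℝ (T v) u := real_inner_comm _ _
  have key : ∀ t : ℝ, 0 ≤ (inner ℝ (T y) y : ℝ) * (t * t) + (2 * inner ℝ (T x) y) * t
      + inner ℝ (T x) x := by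
    intro t
    have h := hT.2 (x + t • y)
    rw [ContinuousLinearMap.reApplyInnerSelf_apply] at h
    simp only [map_add, ContinuousLinearMap.map_smul, inner_add_left, inner_add_right,
      real_inner_smul_left, real_inner_smul_right, smul_eq_mul, RCLike.re_to_real] at h
    rw [hsym y x] at h
    nlinarith [h, sq_nonneg t]
  have hd := discrim_le_zero key
  rw [discrim] at hd
  nlinarith [hd]

private lemma stmt7_opNorm_mono {T S : E →L[ℝ] E} (hT : T.IsPositive)
    (hST : (S - T).IsPositive) : ‖T‖ ≤ ‖S‖ := by
  have hS : S.IsPositive := by simpa using hST.add hT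
  have hkey : ∀ x : E, ‖T x‖ ^ 2 ≤ ‖T‖ * ‖S‖ * ‖x‖ ^ 2 := by
    intro x
    have h1 : (inner ℝ (T x) (T x) : ℝ) ^ 2 ≤ inner ℝ (T x) x * inner ℝ (T (T x)) (T x) :=
      stmt7_cs_pos hT x (T x)
    have h2 : (inner ℝ (T x) x : ℝ) ≤ ‖S‖ * ‖x‖ ^ 2 := by
      have h3 : (0:ℝ) ≤ inner ℝ ((S - T) x) x := by
        have := hST.2 x
        rwa [ContinuousLinearMap.reApplyInnerSelf_apply, RCLike.re_to_real] at this
      have h4 : (inner ℝ ((S - T) x) x : ℝ) = inner ℝ (S x) x - inner ℝ (T x) x := by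
        simp [inner_sub_left]
      have h5 : (inner ℝ (S x) x : ℝ) ≤ ‖S x‖ * ‖x‖ := real_inner_le_norm _ _
      have h6 : ‖S x‖ ≤ ‖S‖ * ‖x‖ := S.le_opNorm x
      nlinarith [norm_nonneg x, norm_nonneg (S x)]
    have h7 : (inner ℝ (T (T x)) (T x) : ℝ) ≤ ‖T‖ * ‖T x‖ ^ 2 := by
      have := real_inner_le_norm (T (T x)) (T x)
      have h8 : ‖T (T x)‖ ≤ ‖T‖ * ‖T x‖ := T.le_opNorm _
      nlinarith [norm_nonneg (T x), norm_nonneg (T (T x))]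
    have h9 : (inner ℝ (T x) (T x) : ℝ) = ‖T x‖ ^ 2 := real_inner_self_eq_norm_sq _
    have h10 : (0:ℝ) ≤ inner ℝ (T x) x := by
      have := hT.2 x
      rwa [ContinuousLinearMap.reApplyInnerSelf_apply, RCLike.re_to_real] at this
    have h11 : (0:ℝ) ≤ inner ℝ (T (T x)) (T x) := by
      have := hT.2 (T x)
      rwa [ContinuousLinearMap.reApplyInnerSelf_apply, RCLike.re_to_real] at this
    have hB : ‖T x‖^2 * ‖T x‖^2 ≤ (‖T‖ * ‖S‖ * ‖x‖^2) * ‖T x‖^2 := by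
      nlinarith [mul_le_mul h2 h7 h11 (by positivity : (0:ℝ) ≤ ‖S‖ * ‖x‖^2)]
    rcases eq_or_lt_of_le (norm_nonneg (T x)) with h | h
    · nlinarith [norm_nonneg x, ContinuousLinearMap.opNorm_nonneg T,
        ContinuousLinearMap.opNorm_nonneg S]
    · exact le_of_mul_le_mul_right hB (by positivity)
  have hTS : ‖T‖ ≤ Real.sqrt (‖T‖ * ‖S‖) := by
    apply ContinuousLinearMap.opNorm_le_bound _ (Real.sqrt_nonneg _)
    intro x
    have h0 : ‖T x‖ ≤ Real.sqrt (‖T‖ * ‖S‖ * ‖x‖ ^ 2) := by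
      rw [← Real.sqrt_sq (norm_nonneg (T x))]
      exact Real.sqrt_le_sqrt (hkey x)
    calc ‖T x‖ ≤ Real.sqrt (‖T‖ * ‖S‖ * ‖x‖ ^ 2) := h0
      _ = Real.sqrt (‖T‖ * ‖S‖) * ‖x‖ := by
          rw [Real.sqrt_mul (by positivity), Real.sqrt_sq (norm_nonneg x)]
  rcases eq_or_lt_of_le (ContinuousLinearMap.opNorm_nonneg T) with h | h
  · rw [← h]; exact ContinuousLinearMap.opNorm_nonneg S
  · have := Real.sq_sqrt (by positivity : (0:ℝ) ≤ ‖T‖ * ‖S‖)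
    nlinarith [hTS]

end Aux

private lemma stmt7_toE_isPositive {n : ℕ} {A : Matrix (Fin n) (Fin n) ℝ} (hA : A.PosSemidef) :
    (Matrix.toEuclideanCLM (𝕜 := ℝ) A).IsPositive := by
  constructor
  · have h1 : star (Matrix.toEuclideanCLM (𝕜 := ℝ) A)
        = Matrix.toEuclideanCLM (𝕜 := ℝ) (star A) := (map_star _ _).symm
    rw [← ContinuousLinearMap.isSelfAdjoint_iff_isSymmetric, _root_.IsSelfAdjoint, h1, Matrix.star_eq_conjTranspose, hA.1]
  · intro x
    have h := hA.dotProduct_mulVec_nonneg (WithLp.ofLp x)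
    rw [ContinuousLinearMap.reApplyInnerSelf_apply]
    simp only [PiLp.inner_apply, RCLike.inner_apply, starRingEnd_apply, star_trivial,
      RCLike.re_to_real]
    simpa [dotProduct, Matrix.mulVec, mul_comm] using h

private lemma stmt7_specNorm_mono {n : ℕ} {A B : Matrix (Fin n) (Fin n) ℝ} (hA : A.PosSemidef)
    (hBA : (B - A).PosSemidef) : specNorm A ≤ specNorm B := by
  refine stmt7_opNorm_mono (stmt7_toE_isPositive hA) ?_
  rw [← map_sub]
  exact stmt7_toE_isPositive hBA

private lemma stmt7_quad_expand {n : ℕ} (A : Matrix (Fin n) (Fin n) ℝ) (x : Fin n → ℝ) :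
    x ⬝ᵥ A *ᵥ x = ∑ s, ∑ t, x s * A s t * x t := by
  simp [dotProduct, Matrix.mulVec, Finset.mul_sum, mul_assoc]

private lemma stmt7_int_sum_sum {Ω : Type*} [MeasurableSpace Ω] (μ : Measure Ω) {n : ℕ}
    (g : Fin n → Fin n → Ω → ℝ) (hg : ∀ s t, Integrable (g s t) μ) :
    ∑ s, ∑ t, ∫ ω, g s t ω ∂μ = ∫ ω, ∑ s, ∑ t, g s t ω ∂μ := by
  have h1 : ∀ s, ∑ t, ∫ ω, g s t ω ∂μ = ∫ ω, ∑ t, g s t ω ∂μ :=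
    fun s => (integral_finset_sum _ fun t _ => hg s t).symm
  simp_rw [h1]
  exact (integral_finset_sum _ fun s _ => integrable_finset_sum _ fun t _ => hg s t).symm

private lemma stmt7_sum_sum_sq {n : ℕ} (x f : Fin n → ℝ) (c : ℝ) :
    ∑ s, ∑ t, x s * (c * (f s * f t)) * x t = c * (∑ s, x s * f s) ^ 2 := by
  have h : (∑ s, x s * f s) ^ 2 = ∑ s, ∑ t, (x s * f s) * (x t * f t) := by
    rw [sq, Finset.sum_mul_sum]
  rw [h, Finset.mul_sum]
  refine Finset.sum_congr rfl fun s _ => ?_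
  rw [Finset.mul_sum]
  exact Finset.sum_congr rfl fun t _ => by ring

/-- if `F` is a random vector in `ℝⁿ` with `‖F‖² ≤ n` almost surely and
`E[F Fᵀ] = K` for a positive semi-definite `K`, then `E[(F Fᵀ − K)²] ⪯ n·K` in the
Loewner order, and consequently `‖E[(F Fᵀ − K)²]‖ ≤ n·‖K‖`.  (Expectations of matrices
are taken entrywise.) -/
theorem stmt7 {Ω : Type*} [MeasurableSpace Ω] (μ : Measure Ω) [IsProbabilityMeasure μ]
    (n : ℕ) (F : Ω → Fin n → ℝ) (hFmeas : Measurable F)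
    (K : Matrix (Fin n) (Fin n) ℝ) (hK : K.PosSemidef)
    (hFbound : ∀ᵐ ω ∂μ, ∑ s, (F ω s) ^ 2 ≤ (n : ℝ))
    (hFmean : ∀ s t, ∫ ω, F ω s * F ω t ∂μ = K s t) :
    let M : Matrix (Fin n) (Fin n) ℝ :=
      Matrix.of fun s t =>
        ∫ ω, ((Matrix.vecMulVec (F ω) (F ω) - K) * (Matrix.vecMulVec (F ω) (F ω) - K)) s t ∂μ
    ((n : ℝ) • K - M).PosSemidef ∧ specNorm M ≤ (n : ℝ) * specNorm K := by
  intro M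
  have hFm : ∀ s, Measurable (fun ω => F ω s) := fun s => (measurable_pi_apply s).comp hFmeas
  have hKsym : ∀ s t, K s t = K t s := by
    intro s t
    conv_lhs => rw [← hK.1]
    simp [conjTranspose_apply]
  -- a.e. bounds
  have hb : ∀ᵐ ω ∂μ, ∀ s, (F ω s)^2 ≤ (n:ℝ) := by
    filter_upwards [hFbound] with ω h s
    exact le_trans (Finset.single_le_sum (fun i _ => sq_nonneg (F ω i)) (Finset.mem_univ s)) h
  have habs : ∀ᵐ ω ∂μ, ∀ s t, |F ω s * F ω t| ≤ (n:ℝ) := by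
    filter_upwards [hb] with ω h s t
    have hs := h s; have ht := h t
    rw [abs_mul]
    nlinarith [sq_nonneg (|F ω s| - |F ω t|), sq_abs (F ω s), sq_abs (F ω t),
      abs_nonneg (F ω s), abs_nonneg (F ω t)]
  -- integrability
  have i2 : ∀ s t, Integrable (fun ω => F ω s * F ω t) μ := by
    intro s t
    refine (integrable_const ((n:ℝ))).mono' ((hFm s).mul (hFm t)).aestronglyMeasurable ?_
    filter_upwards [habs] with ω h
    rw [Real.norm_eq_abs]
    exact h s t
  have hsum_meas : Measurable (fun ω => ∑ u, F ω u ^ 2) :=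
    Finset.measurable_sum _ fun u _ => (hFm u).pow_const 2
  have i4 : ∀ s t, Integrable (fun ω => (∑ u, F ω u ^ 2) * (F ω s * F ω t)) μ := by
    intro s t
    refine (integrable_const ((n:ℝ) * n)).mono'
      (hsum_meas.mul ((hFm s).mul (hFm t))).aestronglyMeasurable ?_
    filter_upwards [hFbound, habs] with ω h h2
    rw [Real.norm_eq_abs, abs_mul]
    refine mul_le_mul ?_ (h2 s t) (abs_nonneg _) (Nat.cast_nonneg n)
    rw [abs_of_nonneg (Finset.sum_nonneg fun i _ => sq_nonneg _)]
    exact h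
  have i4' : ∀ s t, Integrable (fun ω => ((n:ℝ) - ∑ u, F ω u ^ 2) * (F ω s * F ω t)) μ := by
    intro s t
    have he : (fun ω => ((n:ℝ) - ∑ u, F ω u ^ 2) * (F ω s * F ω t))
        = fun ω => (n:ℝ) * (F ω s * F ω t) - (∑ u, F ω u ^ 2) * (F ω s * F ω t) := by
      funext ω; ring
    rw [he]
    exact ((i2 s t).const_mul _).sub (i4 s t)
  -- pointwise entry expansion
  have hGK : ∀ (ω : Ω) s t, ((vecMulVec (F ω) (F ω) - K) * (vecMulVec (F ω) (F ω) - K)) s t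
      = (∑ u, F ω u ^ 2) * (F ω s * F ω t)
        - (∑ u, K u t * (F ω s * F ω u))
        - (∑ u, K s u * (F ω u * F ω t))
        + (K * K) s t := by
    intro ω s t
    simp only [Matrix.mul_apply, Matrix.sub_apply, vecMulVec_apply]
    calc ∑ u, (F ω s * F ω u - K s u) * (F ω u * F ω t - K u t)
        = ∑ u, (F ω u ^ 2 * (F ω s * F ω t) - K u t * (F ω s * F ω u)
            - K s u * (F ω u * F ω t) + K s u * K u t) :=
          Finset.sum_congr rfl fun u _ => by ring
      _ = _ := by
          rw [Finset.sum_add_distrib, Finset.sum_sub_distrib, Finset.sum_sub_distrib,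
            ← Finset.sum_mul]
  -- integrability of entries
  have iE : ∀ s t, Integrable
      (fun ω => ((vecMulVec (F ω) (F ω) - K) * (vecMulVec (F ω) (F ω) - K)) s t) μ := by
    intro s t
    have he : (fun ω => ((vecMulVec (F ω) (F ω) - K) * (vecMulVec (F ω) (F ω) - K)) s t)
        = fun ω => (∑ u, F ω u ^ 2) * (F ω s * F ω t)
          - (∑ u, K u t * (F ω s * F ω u))
          - (∑ u, K s u * (F ω u * F ω t))
          + (K * K) s t := funext fun ω => hGK ω s t
    rw [he]
    exact (((i4 s t).sub (integrable_finset_sum _ fun u _ => (i2 s u).const_mul _)).sub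
      (integrable_finset_sum _ fun u _ => (i2 u t).const_mul _)).add (integrable_const _)
  -- value of M entries
  have hMst : ∀ s t, M s t
      = (∫ ω, (∑ u, F ω u ^ 2) * (F ω s * F ω t) ∂μ) - (K * K) s t := by
    intro s t
    have Ia : Integrable (fun ω => (∑ u, F ω u ^ 2) * (F ω s * F ω t)
        - ∑ u, K u t * (F ω s * F ω u)) μ :=
      (i4 s t).sub (integrable_finset_sum _ fun u _ => (i2 s u).const_mul _)
    have Ib : Integrable (fun ω => ((∑ u, F ω u ^ 2) * (F ω s * F ω t)
        - ∑ u, K u t * (F ω s * F ω u)) - ∑ u, K s u * (F ω u * F ω t)) μ :=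
      Ia.sub (integrable_finset_sum _ fun u _ => (i2 u t).const_mul _)
    show (∫ ω, ((vecMulVec (F ω) (F ω) - K) * (vecMulVec (F ω) (F ω) - K)) s t ∂μ) = _
    simp_rw [hGK]
    rw [integral_add Ib (integrable_const _),
      integral_sub Ia (integrable_finset_sum _ fun u _ => (i2 u t).const_mul _),
      integral_sub (i4 s t) (integrable_finset_sum _ fun u _ => (i2 s u).const_mul _),
      integral_finset_sum _ (fun u _ => (i2 s u).const_mul _),
      integral_finset_sum _ (fun u _ => (i2 u t).const_mul _), integral_const]
    simp_rw [integral_const_mul, hFmean]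
    have h1 : ∑ u, K u t * K s u = (K * K) s t := by
      rw [Matrix.mul_apply]; exact Finset.sum_congr rfl fun u _ => mul_comm _ _
    have h2 : ∑ u, K s u * K u t = (K * K) s t := (Matrix.mul_apply).symm
    simp only [measure_univ, probReal_univ, ENNReal.toReal_one, smul_eq_mul, one_mul, h1, h2]
    ring
  -- the matrix L
  set L : Matrix (Fin n) (Fin n) ℝ :=
    Matrix.of fun s t => ∫ ω, (∑ u, F ω u ^ 2) * (F ω s * F ω t) ∂μ with hL
  have hM_eq : M = L - K * K := by
    ext s t
    rw [Matrix.sub_apply, hMst s t]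
    rfl
  have hKK : (K * K).PosSemidef := by
    have := Matrix.posSemidef_conjTranspose_mul_self K
    rwa [hK.1] at this
  have hLsym : ∀ s t, L s t = L t s := by
    intro s t
    show (∫ ω, (∑ u, F ω u ^ 2) * (F ω s * F ω t) ∂μ)
      = ∫ ω, (∑ u, F ω u ^ 2) * (F ω t * F ω s) ∂μ
    simp_rw [mul_comm (F _ s) (F _ t)]
  -- PSD of n•K - L
  have hA_psd : ((n:ℝ) • K - L).PosSemidef := by
    rw [Matrix.posSemidef_iff_dotProduct_mulVec]
    constructor
    · ext s t
      simp only [conjTranspose_apply, Matrix.sub_apply, Matrix.smul_apply, star_trivial,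
        smul_eq_mul]
      rw [hKsym t s, hLsym t s]
    · intro x
      have hstar : star x = x := by simp
      rw [hstar, stmt7_quad_expand]
      have hent : ∀ s t : Fin n, x s * ((n:ℝ) • K - L) s t * x t
          = ∫ ω, x s * (((n:ℝ) - ∑ u, F ω u ^ 2) * (F ω s * F ω t)) * x t ∂μ := by
        intro s t
        have hnK : ((n:ℝ) • K) s t = ∫ ω, (n:ℝ) * (F ω s * F ω t) ∂μ := by
          rw [Matrix.smul_apply, smul_eq_mul, ← hFmean s t, ← integral_const_mul]
        have hsub : ((n:ℝ) • K - L) s t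
            = ∫ ω, ((n:ℝ) - ∑ u, F ω u ^ 2) * (F ω s * F ω t) ∂μ := by
          rw [Matrix.sub_apply, hnK]
          show _ - (∫ ω, (∑ u, F ω u ^ 2) * (F ω s * F ω t) ∂μ) = _
          rw [← integral_sub ((i2 s t).const_mul _) (i4 s t)]
          congr 1; funext ω; ring
        rw [hsub, ← integral_const_mul, ← integral_mul_const]
      simp_rw [hent]
      rw [stmt7_int_sum_sum μ _ (fun s t => ((i4' s t).const_mul _).mul_const _)]
      apply integral_nonneg_of_ae
      filter_upwards [hFbound] with ω h
      rw [stmt7_sum_sum_sq]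
      exact mul_nonneg (by linarith) (sq_nonneg _)
  -- PSD of M
  have hL_herm : L.IsHermitian := by
    ext s t
    simp only [conjTranspose_apply, star_trivial]
    exact hLsym t s
  have hGsym : ∀ ω : Ω, (vecMulVec (F ω) (F ω) - K)ᴴ = vecMulVec (F ω) (F ω) - K := by
    intro ω
    rw [conjTranspose_sub, hK.1]
    congr 1
    ext i j
    simp [conjTranspose_apply, vecMulVec_apply, mul_comm]
  have hM_psd : M.PosSemidef := by
    rw [Matrix.posSemidef_iff_dotProduct_mulVec]
    constructor
    · rw [hM_eq]
      exact hL_herm.sub hKK.1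
    · intro x
      have hstar : star x = x := by simp
      rw [hstar, stmt7_quad_expand]
      have hent2 : ∀ s t : Fin n, x s * M s t * x t
          = ∫ ω, x s * ((vecMulVec (F ω) (F ω) - K) * (vecMulVec (F ω) (F ω) - K)) s t * x t ∂μ := by
        intro s t
        show x s * (∫ ω, ((vecMulVec (F ω) (F ω) - K) * (vecMulVec (F ω) (F ω) - K)) s t ∂μ) * x t
          = _
        rw [← integral_const_mul, ← integral_mul_const]
      simp_rw [hent2]
      rw [stmt7_int_sum_sum μ _ (fun s t => ((iE s t).const_mul _).mul_const _)]
      apply integral_nonneg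
      intro ω
      have h := (Matrix.posSemidef_conjTranspose_mul_self (vecMulVec (F ω) (F ω) - K)).dotProduct_mulVec_nonneg x
      rw [hGsym ω] at h
      rwa [hstar, stmt7_quad_expand] at h
  -- first goal
  have goal1 : ((n : ℝ) • K - M).PosSemidef := by
    have heq : (n : ℝ) • K - M = ((n:ℝ) • K - L) + K * K := by
      rw [hM_eq]; abel
    rw [heq]
    exact hA_psd.add hKK
  refine ⟨goal1, ?_⟩
  have h2 : specNorm M ≤ specNorm ((n:ℝ) • K) := stmt7_specNorm_mono hM_psd goal1
  calc specNorm M ≤ specNorm ((n:ℝ) • K) := h2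
    _ = ‖(n:ℝ) • Matrix.toEuclideanCLM (𝕜 := ℝ) K‖ := by
        rw [specNorm, _root_.map_smul]
    _ ≤ ‖(n:ℝ)‖ * ‖Matrix.toEuclideanCLM (𝕜 := ℝ) K‖ :=
        ContinuousLinearMap.opNorm_smul_le _ _
    _ = (n:ℝ) * specNorm K := by rw [specNorm]; simp
end

section
/- Let v ≥ 1 and n = vñ. Let K = diag(K_1,…,K_v) and K̂ = diag(K̂_1,…,K̂_v) be real block-diagonal n×n matrices, H^D and H^S the multi-view structure matrices with ‖H^D‖ = ‖H^S‖ = 1 and Kᵀ H^S K positive semi-definite, and set D = Kᵀ H^D K, S = Kᵀ H^S K, D̂ = K̂ᵀ H^D K̂, Ŝ = K̂ᵀ H^S K̂. Let ε > 0 and suppose ‖K_j − K̂_j‖ ≤ ξ for all j = 1,…,v. Then, writing ‖K*‖ = max_j ‖K_j‖, ‖K̂*‖ = max_j ‖K̂_j‖, and C = (1+√5)/2: ‖(S + εI)^{-1} D − (Ŝ + εI)^{-1} D̂‖ ≤ C·‖K*‖²·(‖K*‖+‖K̂*‖)·ξ/ε² + (‖K*‖+‖K̂*‖)·ξ/ε.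 -/
open Matrix RealInnerProductSpace
set_option maxHeartbeats 1000000
set_option synthInstance.maxHeartbeats 400000

section helpers
variable {I : Type*} [Fintype I] [DecidableEq I]

lemma specNorm_nonneg (A : Matrix I I ℝ) : 0 ≤ specNorm A := norm_nonneg _

lemma specNorm_mul_le (A B : Matrix I I ℝ) :
    specNorm (A * B) ≤ specNorm A * specNorm B := by
  unfold specNorm; rw [_root_.map_mul]; exact norm_mul_le _ _

lemma specNorm_add_le (A B : Matrix I I ℝ) :
    specNorm (A + B) ≤ specNorm A + specNorm B := by
  unfold specNorm; rw [_root_.map_add]; exact norm_add_le _ _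

lemma specNorm_transpose (A : Matrix I I ℝ) : specNorm Aᵀ = specNorm A := by
  unfold specNorm
  rw [← Matrix.conjTranspose_eq_transpose_of_trivial, ← Matrix.star_eq_conjTranspose,
    map_star, ContinuousLinearMap.star_eq_adjoint]
  exact ContinuousLinearMap.adjoint.norm_map _

lemma smul_one_posDef {ε : ℝ} (hε : 0 < ε) : (ε • (1 : Matrix I I ℝ)).PosDef := by
  have h1 : (1 : Matrix I I ℝ).PosDef := Matrix.PosDef.one
  refine posDef_iff_dotProduct_mulVec.mpr ⟨?_, fun x hx => ?_⟩
  · unfold Matrix.IsHermitian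
    rw [Matrix.conjTranspose_smul, Matrix.conjTranspose_one]
    simp
  · have := (posDef_iff_dotProduct_mulVec.mp h1).2 hx
    rw [Matrix.smul_mulVec, dotProduct_smul]
    rw [Matrix.one_mulVec] at this ⊢
    exact mul_pos hε (by simpa using this)

lemma specNorm_inv_le {S : Matrix I I ℝ} (hS : S.PosSemidef) {ε : ℝ} (hε : 0 < ε) :
    specNorm (S + ε • 1)⁻¹ ≤ 1 / ε := by
  set M := S + ε • 1 with hMdef
  have hM : M.PosDef := Matrix.PosDef.posSemidef_add hS (smul_one_posDef hε)
  have hMul : M * M⁻¹ = 1 :=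
    Matrix.mul_nonsing_inv M ((Matrix.isUnit_iff_isUnit_det M).1 hM.isUnit)
  unfold specNorm
  apply ContinuousLinearMap.opNorm_le_bound _ (by positivity)
  intro y
  set T := Matrix.toEuclideanCLM (n := I) (𝕜 := ℝ) with hT
  set x : EuclideanSpace ℝ I := T M⁻¹ y with hx
  have hTx : T M x = y := by
    rw [hx, ← ContinuousLinearMap.mul_apply, ← _root_.map_mul, hMul, _root_.map_one,
      ContinuousLinearMap.one_apply]
  set x' : I → ℝ := WithLp.equiv _ _ x with hx'
  have hinner : ⟪x, T M x⟫ = x' ⬝ᵥ (M *ᵥ x') := by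
    rw [EuclideanSpace.inner_eq_star_dotProduct, star_trivial, hx']
    rw [hT, Matrix.ofLp_toEuclideanCLM, dotProduct_comm]
    try rfl
  have hself : x' ⬝ᵥ x' = ‖x‖ ^ 2 := by
    have : ⟪x, x⟫ = x' ⬝ᵥ x' := by
      rw [EuclideanSpace.inner_eq_star_dotProduct, star_trivial, hx']
      rfl
    rw [← this, real_inner_self_eq_norm_sq]
  have hpos : ε * ‖x‖ ^ 2 ≤ ⟪x, T M x⟫ := by
    rw [hinner, hMdef, Matrix.add_mulVec, dotProduct_add,
      Matrix.smul_mulVec, Matrix.one_mulVec, dotProduct_smul,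
      smul_eq_mul, hself]
    have h0 : 0 ≤ x' ⬝ᵥ (S *ᵥ x') := by simpa using hS.dotProduct_mulVec_nonneg x'
    linarith
  have hCS : ⟪x, T M x⟫ ≤ ‖x‖ * ‖T M x‖ := real_inner_le_norm _ _
  rw [hTx] at hCS hpos
  have key : ε * ‖x‖ ^ 2 ≤ ‖x‖ * ‖y‖ := le_trans hpos hCS
  rcases eq_or_lt_of_le (norm_nonneg x) with h0 | h0
  · rw [← h0]; positivity
  · rw [one_div, inv_mul_eq_div, le_div_iff₀ hε]
    nlinarith [key, h0, hε]

lemma specNorm_blockDiagonal_le {v nt : ℕ} (M : Fin v → Matrix (Fin nt) (Fin nt) ℝ)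
    {C : ℝ} (hC : 0 ≤ C) (h : ∀ j, specNorm (M j) ≤ C) :
    specNorm (Matrix.blockDiagonal M) ≤ C := by
  unfold specNorm
  apply ContinuousLinearMap.opNorm_le_bound _ hC
  intro x
  set T := Matrix.toEuclideanCLM (n := Fin nt × Fin v) (𝕜 := ℝ) with hT
  set x' : Fin nt × Fin v → ℝ := WithLp.equiv _ _ x with hx'
  set y : EuclideanSpace ℝ (Fin nt × Fin v) := T (Matrix.blockDiagonal M) x with hy
  have hyv : WithLp.equiv _ _ y = Matrix.blockDiagonal M *ᵥ x' := by
    rw [hy, hT]; exact Matrix.ofLp_toEuclideanCLM _ _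
  have hblock : ∀ i j, (Matrix.blockDiagonal M *ᵥ x') (i, j)
      = (M j *ᵥ fun i' => x' (i', j)) i := by
    intro i j
    rw [Matrix.mulVec, dotProduct]
    rw [Fintype.sum_prod_type]
    rw [Matrix.mulVec]
    simp only [Matrix.blockDiagonal_apply, dotProduct]
    rw [Finset.sum_comm]
    rw [Finset.sum_eq_single j]
    · simp
    · intro b _ hb
      simp [Ne.symm hb]
    · simp
  -- squared norm computation
  have hnormy : ‖y‖ ^ 2 = ∑ p : Fin nt × Fin v, ((Matrix.blockDiagonal M *ᵥ x') p) ^ 2 := by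
    rw [EuclideanSpace.norm_eq, Real.sq_sqrt (by positivity)]
    refine Finset.sum_congr rfl fun p _ => ?_
    rw [Real.norm_eq_abs, sq_abs]
    exact congrArg (fun t => t ^ 2) (congrFun hyv p)
  have hnormx : ‖x‖ ^ 2 = ∑ p : Fin nt × Fin v, (x' p) ^ 2 := by
    rw [EuclideanSpace.norm_eq, Real.sq_sqrt (by positivity)]
    refine Finset.sum_congr rfl fun p _ => ?_
    rw [Real.norm_eq_abs, sq_abs]
    rfl
  have key : ‖y‖ ^ 2 ≤ C ^ 2 * ‖x‖ ^ 2 := by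
    rw [hnormy, hnormx]
    simp only [Fintype.sum_prod_type_right]
    rw [Finset.mul_sum]
    refine Finset.sum_le_sum fun j _ => ?_
    -- per-block bound
    set ξ : EuclideanSpace ℝ (Fin nt) := (WithLp.equiv _ _).symm (fun i' => x' (i', j)) with hξ
    have h1 : ∑ i : Fin nt, ((Matrix.blockDiagonal M *ᵥ x') (i, j)) ^ 2
        = ‖Matrix.toEuclideanCLM (n := Fin nt) (𝕜 := ℝ) (M j) ξ‖ ^ 2 := by
      rw [EuclideanSpace.norm_eq, Real.sq_sqrt (by positivity)]
      refine Finset.sum_congr rfl fun i _ => ?_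
      rw [hblock i j, Real.norm_eq_abs, sq_abs]
      rfl
    have h2 : ‖ξ‖ ^ 2 = ∑ i : Fin nt, (x' (i, j)) ^ 2 := by
      rw [EuclideanSpace.norm_eq, Real.sq_sqrt (by positivity)]
      refine Finset.sum_congr rfl fun i _ => ?_
      rw [Real.norm_eq_abs, sq_abs]
      rfl
    rw [h1, ← h2]
    have hb : ‖Matrix.toEuclideanCLM (n := Fin nt) (𝕜 := ℝ) (M j) ξ‖ ≤ C * ‖ξ‖ := by
      calc ‖Matrix.toEuclideanCLM (n := Fin nt) (𝕜 := ℝ) (M j) ξ‖ ≤ ‖Matrix.toEuclideanCLM (n := Fin nt) (𝕜 := ℝ) (M j)‖ * ‖ξ‖ := (Matrix.toEuclideanCLM (n := Fin nt) (𝕜 := ℝ) (M j)).le_opNorm ξ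
        _ ≤ C * ‖ξ‖ := by
            apply mul_le_mul_of_nonneg_right (h j) (norm_nonneg _)
    calc ‖Matrix.toEuclideanCLM (n := Fin nt) (𝕜 := ℝ) (M j) ξ‖ ^ 2 ≤ (C * ‖ξ‖) ^ 2 := by
          apply pow_le_pow_left₀ (norm_nonneg _) hb
      _ = C ^ 2 * ‖ξ‖ ^ 2 := by ring
  have : ‖y‖ ≤ C * ‖x‖ := by
    nlinarith [norm_nonneg y, norm_nonneg x, mul_nonneg hC (norm_nonneg x), key]
  exact this
end helpers

section main
variable {I : Type*} [Fintype I] [DecidableEq I]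

lemma specNorm_mul3_le (A B C : Matrix I I ℝ) {a b c : ℝ}
    (ha : specNorm A ≤ a) (hb : specNorm B ≤ b) (hc : specNorm C ≤ c)
    (ha0 : 0 ≤ a) (hb0 : 0 ≤ b) : specNorm (A * B * C) ≤ a * b * c := by
  calc specNorm (A * B * C) ≤ specNorm (A * B) * specNorm C := specNorm_mul_le _ _
    _ ≤ (a * b) * c := by
        apply mul_le_mul _ hc (specNorm_nonneg _) (mul_nonneg ha0 hb0)
        calc specNorm (A * B) ≤ specNorm A * specNorm B := specNorm_mul_le _ _
          _ ≤ a * b := mul_le_mul ha hb (specNorm_nonneg _) ha0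
    _ = a * b * c := rfl

lemma main_aux (K Kh HD HS : Matrix I I ℝ)
    (hS : (Kᵀ * HS * K).PosSemidef) (hSh : (Khᵀ * HS * Kh).PosSemidef)
    (a b c : ℝ) (hK : specNorm K ≤ a) (hKh : specNorm Kh ≤ b)
    (hKKh : specNorm (K - Kh) ≤ c) (ha : 0 ≤ a) (hb : 0 ≤ b) (hc : 0 ≤ c)
    (hnHD : specNorm HD = 1) (hnHS : specNorm HS = 1)
    (ε : ℝ) (hε : 0 < ε) :
    specNorm ((Kᵀ * HS * K + ε • 1)⁻¹ * (Kᵀ * HD * K)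
        - (Khᵀ * HS * Kh + ε • 1)⁻¹ * (Khᵀ * HD * Kh)) ≤
      (1/ε) * ((a + b) * c) + (1/ε) * ((a + b) * c) * ((1/ε) * (a * 1 * a)) := by
  set D := Kᵀ * HD * K with hD
  set S := Kᵀ * HS * K with hSdef
  set Dh := Khᵀ * HD * Kh with hDh
  set Sh := Khᵀ * HS * Kh with hShdef
  set A := S + ε • 1 with hA
  set Ah := Sh + ε • 1 with hAh
  have hApd : A.PosDef := Matrix.PosDef.posSemidef_add hS (smul_one_posDef hε)
  have hAhpd : Ah.PosDef := Matrix.PosDef.posSemidef_add hSh (smul_one_posDef hε)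
  have e1 : Ah⁻¹ * Ah = 1 :=
    Matrix.nonsing_inv_mul _ ((Matrix.isUnit_iff_isUnit_det _).1 hAhpd.isUnit)
  have e2 : A * A⁻¹ = 1 :=
    Matrix.mul_nonsing_inv _ ((Matrix.isUnit_iff_isUnit_det _).1 hApd.isUnit)
  -- transpose norms
  have hKt : specNorm Kᵀ ≤ a := by rw [specNorm_transpose]; exact hK
  have hKht : specNorm Khᵀ ≤ b := by rw [specNorm_transpose]; exact hKh
  have hKKht : specNorm (K - Kh)ᵀ ≤ c := by rw [specNorm_transpose]; exact hKKh
  have h1 : (1:ℝ) ≤ 1 := le_refl 1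
  -- difference bounds
  have hDdiff : specNorm (D - Dh) ≤ (a + b) * c := by
    have hsplit : D - Dh = Kᵀ * HD * (K - Kh) + (K - Kh)ᵀ * HD * Kh := by
      rw [hD, hDh, Matrix.transpose_sub]
      noncomm_ring
    rw [hsplit]
    calc specNorm (Kᵀ * HD * (K - Kh) + (K - Kh)ᵀ * HD * Kh)
        ≤ specNorm (Kᵀ * HD * (K - Kh)) + specNorm ((K - Kh)ᵀ * HD * Kh) :=
          specNorm_add_le _ _
      _ ≤ a * 1 * c + c * 1 * b := by
          gcongr
          · exact specNorm_mul3_le _ _ _ hKt (le_of_eq hnHD) hKKh ha zero_le_one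
          · exact specNorm_mul3_le _ _ _ hKKht (le_of_eq hnHD) hKh hc zero_le_one
      _ = (a + b) * c := by ring
  have hSdiff : specNorm (Sh - S) ≤ (a + b) * c := by
    have hsplit : Sh - S = -(Kᵀ * HS * (K - Kh) + (K - Kh)ᵀ * HS * Kh) := by
      rw [hSdef, hShdef, Matrix.transpose_sub]
      noncomm_ring
    rw [hsplit]
    have hneg : specNorm (-(Kᵀ * HS * (K - Kh) + (K - Kh)ᵀ * HS * Kh))
        = specNorm (Kᵀ * HS * (K - Kh) + (K - Kh)ᵀ * HS * Kh) := by
      unfold specNorm; rw [map_neg, norm_neg]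
    rw [hneg]
    calc specNorm (Kᵀ * HS * (K - Kh) + (K - Kh)ᵀ * HS * Kh)
        ≤ specNorm (Kᵀ * HS * (K - Kh)) + specNorm ((K - Kh)ᵀ * HS * Kh) :=
          specNorm_add_le _ _
      _ ≤ a * 1 * c + c * 1 * b := by
          gcongr
          · exact specNorm_mul3_le _ _ _ hKt (le_of_eq hnHS) hKKh ha zero_le_one
          · exact specNorm_mul3_le _ _ _ hKKht (le_of_eq hnHS) hKh hc zero_le_one
      _ = (a + b) * c := by ring
  -- bounds on inverses and D
  have hInvA : specNorm A⁻¹ ≤ 1/ε := specNorm_inv_le hS hε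
  have hInvAh : specNorm Ah⁻¹ ≤ 1/ε := specNorm_inv_le hSh hε
  have hDnorm : specNorm D ≤ a * 1 * a := specNorm_mul3_le _ _ _ hKt (le_of_eq hnHD) hK ha zero_le_one
  -- key identity
  have hid : A⁻¹ * D - Ah⁻¹ * Dh = Ah⁻¹ * (D - Dh) + Ah⁻¹ * (Sh - S) * (A⁻¹ * D) := by
    have hAhA : Sh - S = Ah - A := by rw [hA, hAh]; abel
    rw [hAhA, Matrix.mul_sub Ah⁻¹ Ah A, Matrix.sub_mul, e1, one_mul]
    have h4 : Ah⁻¹ * A * (A⁻¹ * D) = Ah⁻¹ * D := by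
      rw [mul_assoc, ← mul_assoc A, e2, one_mul]
    rw [h4, Matrix.mul_sub Ah⁻¹ D Dh]
    abel
  rw [hid]
  calc specNorm (Ah⁻¹ * (D - Dh) + Ah⁻¹ * (Sh - S) * (A⁻¹ * D))
      ≤ specNorm (Ah⁻¹ * (D - Dh)) + specNorm (Ah⁻¹ * (Sh - S) * (A⁻¹ * D)) :=
        specNorm_add_le _ _
    _ ≤ (1/ε) * ((a + b) * c) + (1/ε) * ((a + b) * c) * ((1/ε) * (a * 1 * a)) := by
        gcongr
        · calc specNorm (Ah⁻¹ * (D - Dh)) ≤ specNorm Ah⁻¹ * specNorm (D - Dh) :=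
              specNorm_mul_le _ _
            _ ≤ (1/ε) * ((a + b) * c) := by
                apply mul_le_mul hInvAh hDdiff (specNorm_nonneg _) (by positivity)
        · apply specNorm_mul3_le _ _ _ hInvAh hSdiff _ (by positivity) (by positivity)
          calc specNorm (A⁻¹ * D) ≤ specNorm A⁻¹ * specNorm D := specNorm_mul_le _ _
            _ ≤ (1/ε) * (a * 1 * a) := by
                apply mul_le_mul hInvA hDnorm (specNorm_nonneg _) (by positivity)
end main

/-- with block-diagonal kernel matrices `K = diag(K₁,…,K_v)`,
`K̂ = diag(K̂₁,…,K̂_v)`, positive semi-definite structure matrices `H^D, H^S` of spectral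
norm `1` (so in particular `S = Kᵀ H^S K` is positive semi-definite), `ε > 0`, and
`‖K_j − K̂_j‖ ≤ ξ` for all `j`, one has
`‖(S+εI)⁻¹D − (Ŝ+εI)⁻¹D̂‖ ≤ C‖K*‖²(‖K*‖+‖K̂*‖)ξ/ε² + (‖K*‖+‖K̂*‖)ξ/ε`
with `C = (1+√5)/2`, `‖K*‖ = max_j ‖K_j‖`, `‖K̂*‖ = max_j ‖K̂_j‖`. -/
theorem stmt15 (v nt : ℕ) (hv : 1 ≤ v)
    (Kb Khb : Fin v → Matrix (Fin nt) (Fin nt) ℝ)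
    (HD HS : Matrix (Fin nt × Fin v) (Fin nt × Fin v) ℝ)
    (hHD : HD.PosSemidef) (hHS : HS.PosSemidef)
    (hnHD : specNorm HD = 1) (hnHS : specNorm HS = 1)
    (hSpsd : ((Matrix.blockDiagonal Kb)ᵀ * HS * Matrix.blockDiagonal Kb).PosSemidef)
    (ε ξ : ℝ) (hε : 0 < ε) (hξ : ∀ j, specNorm (Kb j - Khb j) ≤ ξ) :
    let K := Matrix.blockDiagonal Kb
    let Kh := Matrix.blockDiagonal Khb
    let D := Kᵀ * HD * K
    let S := Kᵀ * HS * K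
    let Dh := Khᵀ * HD * Kh
    let Sh := Khᵀ * HS * Kh
    let Kstar := ⨆ j, specNorm (Kb j)
    let Khstar := ⨆ j, specNorm (Khb j)
    specNorm ((S + ε • 1)⁻¹ * D - (Sh + ε • 1)⁻¹ * Dh) ≤
      ((1 + Real.sqrt 5) / 2) * Kstar ^ 2 * (Kstar + Khstar) * ξ / ε ^ 2 +
        (Kstar + Khstar) * ξ / ε := by
  intro K Kh D S Dh Sh Kstar Khstar
  have j0 : Fin v := ⟨0, hv⟩
  have hbdd : BddAbove (Set.range fun j => specNorm (Kb j)) := (Set.finite_range _).bddAbove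
  have hbdd' : BddAbove (Set.range fun j => specNorm (Khb j)) := (Set.finite_range _).bddAbove
  have hKs0 : 0 ≤ Kstar := le_trans (specNorm_nonneg (Kb j0)) (le_ciSup hbdd j0)
  have hKhs0 : 0 ≤ Khstar := le_trans (specNorm_nonneg (Khb j0)) (le_ciSup hbdd' j0)
  have hxi0 : 0 ≤ ξ := le_trans (specNorm_nonneg _) (hξ j0)
  have hK : specNorm K ≤ Kstar := specNorm_blockDiagonal_le Kb hKs0 (fun j => le_ciSup hbdd j)
  have hKh : specNorm Kh ≤ Khstar :=
    specNorm_blockDiagonal_le Khb hKhs0 (fun j => le_ciSup hbdd' j)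
  have hKKh : specNorm (K - Kh) ≤ ξ := by
    have hsub : K - Kh = Matrix.blockDiagonal (Kb - Khb) :=
      (Matrix.blockDiagonal_sub Kb Khb).symm
    rw [hsub]
    exact specNorm_blockDiagonal_le (Kb - Khb) hxi0 (fun j => hξ j)
  have hShpsd : (Khᵀ * HS * Kh).PosSemidef := by
    have h := hHS.conjTranspose_mul_mul_same Kh
    rwa [Matrix.conjTranspose_eq_transpose_of_trivial] at h
  have main := main_aux K Kh HD HS hSpsd hShpsd Kstar Khstar ξ hK hKh hKKh hKs0 hKhs0 hxi0
    hnHD hnHS ε hε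
  refine le_trans main ?_
  have hC : (1:ℝ) ≤ (1 + Real.sqrt 5) / 2 := by
    have h5 : (1:ℝ) ≤ Real.sqrt 5 := by
      rw [show (1:ℝ) = Real.sqrt 1 by simp]
      exact Real.sqrt_le_sqrt (by norm_num)
    linarith
  have ht : 0 ≤ Kstar ^ 2 * (Kstar + Khstar) * ξ / ε ^ 2 := by
    apply div_nonneg _ (by positivity)
    exact mul_nonneg (mul_nonneg (pow_nonneg hKs0 2) (add_nonneg hKs0 hKhs0)) hxi0
  have heq : (1/ε) * ((Kstar + Khstar) * ξ) * ((1/ε) * (Kstar * 1 * Kstar))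
      = Kstar ^ 2 * (Kstar + Khstar) * ξ / ε ^ 2 := by
    field_simp
  have heq2 : (1/ε) * ((Kstar + Khstar) * ξ) = (Kstar + Khstar) * ξ / ε := by ring
  rw [heq, heq2]
  have hfirst : Kstar ^ 2 * (Kstar + Khstar) * ξ / ε ^ 2
      ≤ (1 + Real.sqrt 5) / 2 * Kstar ^ 2 * (Kstar + Khstar) * ξ / ε ^ 2 := by
    rw [div_le_div_iff_of_pos_right (by positivity)]
    have ht' : 0 ≤ Kstar ^ 2 * (Kstar + Khstar) * ξ :=
      mul_nonneg (mul_nonneg (pow_nonneg hKs0 2) (add_nonneg hKs0 hKhs0)) hxi0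
    nlinarith [ht', hC]
  linarith [hfirst]
end
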